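/- Stability of the uniform point at weak feedback in the two-state model: for f(x) = (1-β)·x^α/(x^α+(1-x)^α) + β/2, the derivative at the symmetric fixed point is f'(1/2) = (1-β)·α; hence x = 1/2 is a locally attracting fixed point if (1-β)α < 1 and repelling if (1-β)α > 1, giving the critical threshold α_c = 1/(1-β). -/

import Mathlib

open Real Filter

lemma two_state_deriv_bound {f : ℝ → ℝ} {d p ε : ℝ} (hf : HasDerivAt f d p)
    (hfp : f p = p) (hε : 0 < ε) :
    ∃ δ > 0, ∀ x, |x - p| < δ → |f x - p - (x - p) * d| ≤ ε * |x - p| := by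
  have h := (hasDerivAt_iff_isLittleO.mp hf).def hε
  rw [Metric.eventually_nhds_iff] at h
  obtain ⟨δ, hδ, h⟩ := h
  refine ⟨δ, hδ, fun x hx => ?_⟩
  have := h (show dist x p < δ by rwa [Real.dist_eq])
  simpa [hfp, Real.norm_eq_abs, smul_eq_mul, mul_comm] using this

lemma two_state_attract {f : ℝ → ℝ} {d p : ℝ} (hf : HasDerivAt f d p) (hfp : f p = p)
    (hd : |d| < 1) :
    ∃ δ > 0, ∀ x : ℝ, |x - p| < δ → Tendsto (fun n => f^[n] x) atTop (nhds p) := by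
  set ε := (1 - |d|) / 2 with hε
  have hε0 : 0 < ε := by simp only [hε]; linarith
  obtain ⟨δ, hδ0, hδ⟩ := two_state_deriv_bound hf hfp hε0
  set c := |d| + ε with hc
  have hc1 : c < 1 := by simp only [hc, hε]; linarith
  have hc0 : 0 ≤ c := by have := abs_nonneg d; simp only [hc]; linarith
  refine ⟨δ, hδ0, fun x hx => ?_⟩
  have key : ∀ n, |f^[n] x - p| ≤ c ^ n * |x - p| ∧ |f^[n] x - p| < δ := by
    intro n
    induction n with
    | zero => simpa using hx
    | succ n ih =>
      obtain ⟨ih1, ih2⟩ := ih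
      have step : |f (f^[n] x) - p| ≤ c * |f^[n] x - p| := by
        have h1 := hδ _ ih2
        have : |f (f^[n] x) - p| ≤ |f (f^[n] x) - p - (f^[n] x - p) * d| + |(f^[n] x - p) * d| := by
          have := abs_sub_abs_le_abs_sub (f (f^[n] x) - p) ((f^[n] x - p) * d)
          calc |f (f^[n] x) - p| = |(f (f^[n] x) - p - (f^[n] x - p) * d) + (f^[n] x - p) * d| := by ring_nf
            _ ≤ _ := abs_add_le _ _
        rw [abs_mul] at this
        calc |f (f^[n] x) - p| ≤ ε * |f^[n] x - p| + |f^[n] x - p| * |d| := le_trans this (by linarith [h1])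
          _ = c * |f^[n] x - p| := by ring
      rw [Function.iterate_succ_apply']
      constructor
      · calc |f (f^[n] x) - p| ≤ c * |f^[n] x - p| := step
          _ ≤ c * (c ^ n * |x - p|) := by nlinarith [abs_nonneg (f^[n] x - p)]
          _ = c ^ (n+1) * |x - p| := by ring
      · calc |f (f^[n] x) - p| ≤ c * |f^[n] x - p| := step
          _ < δ := by nlinarith [abs_nonneg (f^[n] x - p)]
  have hto : Tendsto (fun n => c ^ n * |x - p|) atTop (nhds 0) := by
    simpa using (tendsto_pow_atTop_nhds_zero_of_lt_one hc0 hc1).mul_const |x - p|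
  have : Tendsto (fun n => f^[n] x - p) atTop (nhds 0) := by
    apply squeeze_zero_norm (fun n => by simpa [Real.norm_eq_abs] using (key n).1) hto
  have := this.add_const p
  simpa using this

lemma two_state_repel {f : ℝ → ℝ} {d p : ℝ} (hf : HasDerivAt f d p) (hfp : f p = p)
    (hd : 1 < |d|) :
    ∃ δ > 0, ∀ x : ℝ, x ≠ p → |x - p| < δ → ∃ n : ℕ, δ ≤ |f^[n] x - p| := by
  set ε := (|d| - 1) / 2 with hε
  have hε0 : 0 < ε := by simp only [hε]; linarith
  obtain ⟨δ, hδ0, hδ⟩ := two_state_deriv_bound hf hfp hε0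
  set c := |d| - ε with hc
  have hc1 : 1 < c := by simp only [hc, hε]; linarith
  refine ⟨δ, hδ0, fun x hxne hx => ?_⟩
  by_contra h
  push_neg at h
  have key : ∀ n, c ^ n * |x - p| ≤ |f^[n] x - p| := by
    intro n
    induction n with
    | zero => simp
    | succ n ih =>
      have hlt := h n
      have step : c * |f^[n] x - p| ≤ |f (f^[n] x) - p| := by
        have h1 := hδ _ hlt
        have h2 : |(f^[n] x - p) * d| - |f (f^[n] x) - p| ≤ |f (f^[n] x) - p - (f^[n] x - p) * d| := by
          have := abs_sub_abs_le_abs_sub ((f^[n] x - p) * d) (f (f^[n] x) - p)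
          calc |(f^[n] x - p) * d| - |f (f^[n] x) - p| ≤ |(f^[n] x - p) * d - (f (f^[n] x) - p)| := this
            _ = |f (f^[n] x) - p - (f^[n] x - p) * d| := by rw [abs_sub_comm]
        rw [abs_mul] at h2
        have : |f^[n] x - p| * |d| - ε * |f^[n] x - p| ≤ |f (f^[n] x) - p| := by linarith
        calc c * |f^[n] x - p| = |f^[n] x - p| * |d| - ε * |f^[n] x - p| := by ring
          _ ≤ _ := this
      rw [Function.iterate_succ_apply']
      calc c ^ (n+1) * |x - p| = c * (c ^ n * |x - p|) := by ring
        _ ≤ c * |f^[n] x - p| := by nlinarith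
        _ ≤ |f (f^[n] x) - p| := step
  have hxp : 0 < |x - p| := abs_pos.mpr (sub_ne_zero.mpr hxne)
  have : Tendsto (fun n => c ^ n * |x - p|) atTop atTop :=
    (tendsto_pow_atTop_atTop_of_one_lt hc1).atTop_mul_const hxp
  obtain ⟨n, hn⟩ := (this.eventually_ge_atTop δ).exists
  exact absurd (lt_of_le_of_lt (hn.trans (key n)) (h n)) (lt_irrefl _)

theorem uniform_point_stability_threshold (α β : ℝ) (hα : 0 < α)
    (hβ0 : 0 < β) (hβ1 : β < 1)
    (f : ℝ → ℝ)
    (hf : ∀ x, f x = (1 - β) * (x ^ α / (x ^ α + (1 - x) ^ α)) + β / 2) :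
    HasDerivAt f ((1 - β) * α) (1/2) ∧
    ((1 - β) * α < 1 →
      ∃ δ > 0, ∀ x : ℝ, |x - 1/2| < δ →
        Tendsto (fun n => f^[n] x) atTop (nhds (1/2))) ∧
    (1 < (1 - β) * α →
      ∃ δ > 0, ∀ x : ℝ, x ≠ 1/2 → |x - 1/2| < δ →
        ∃ n : ℕ, δ ≤ |f^[n] x - 1/2|) := by
  have hpos : (0:ℝ) < (1/2:ℝ) ^ α := rpow_pos_of_pos (by norm_num) α
  have hderiv : HasDerivAt f ((1 - β) * α) (1/2) := by
    have hfe : f = fun x => (1 - β) * (x ^ α / (x ^ α + (1 - x) ^ α)) + β / 2 :=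
      funext hf
    rw [hfe]
    have h1 : HasDerivAt (fun x : ℝ => x ^ α) (α * (1/2 : ℝ) ^ (α - 1)) (1/2) :=
      Real.hasDerivAt_rpow_const (Or.inl (by norm_num))
    have h2 : HasDerivAt (fun x : ℝ => (1 - x) ^ α) (-(α * (1/2 : ℝ) ^ (α - 1))) (1/2) := by
      have hlin : HasDerivAt (fun x : ℝ => 1 - x) (-1) (1/2) := by
        simpa using (hasDerivAt_id (1/2:ℝ)).const_sub 1
      have := (Real.hasDerivAt_rpow_const (p := α)
        (x := (1:ℝ) - 1/2) (Or.inl (by norm_num))).comp (1/2) hlin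
      refine this.congr_deriv ?_
      norm_num
    have hsum := h1.add h2
    have hden : ((1:ℝ)/2) ^ α + ((1:ℝ) - 1/2) ^ α ≠ 0 := by
      norm_num; positivity
    have hdiv := h1.div hsum hden
    have heq : (1/2:ℝ) ^ (α - 1) = 2 * (1/2:ℝ) ^ α := by
      rw [rpow_sub (by norm_num : (0:ℝ) < 1/2), rpow_one]
      ring
    have hval : (α * (1/2:ℝ) ^ (α - 1) * ((1/2:ℝ)^α + ((1:ℝ)-1/2)^α) -
        (1/2:ℝ)^α * (α * (1/2:ℝ)^(α-1) + -(α * (1/2:ℝ)^(α-1)))) /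
        ((1/2:ℝ)^α + ((1:ℝ)-1/2)^α)^2 = α := by
      norm_num
      rw [heq]
      field_simp
      ring
    rw [Pi.add_apply, hval] at hdiv
    have := (hdiv.const_mul (1-β)).add_const (β/2)
    exact this
  have hfix : f (1/2) = 1/2 := by
    rw [hf]
    have : ((1:ℝ) - 1/2) = 1/2 := by norm_num
    rw [this]
    field_simp
    ring
  have hdpos : 0 < (1 - β) * α := mul_pos (by linarith) hα
  refine ⟨hderiv, fun hlt => ?_, fun hgt => ?_⟩
  · exact two_state_attract hderiv hfix (by rw [abs_of_pos hdpos]; exact hlt)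
  · exact two_state_repel hderiv hfix (by rw [abs_of_pos hdpos]; exact hgt)
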